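/- The explicit Laplace transform E[e^{-σV}] from (3.14) satisfies E[e^{-σV}] ~ (9/2)(3√2 - 4)·e^{-√6·σ^{1/4}} as σ → +∞. -/

import Mathlib

open Real Filter Asymptotics

noncomputable def Ppoly (r : ℝ) : ℝ :=
  96 * (-252 - 399 * Real.sqrt 3 * r - 756 * r ^ 2 - 161 * Real.sqrt 3 * r ^ 3
    + 170 * r ^ 4 + 153 * Real.sqrt 3 * r ^ 5 + 144 * r ^ 6 + 22 * Real.sqrt 3 * r ^ 7
    + 4 * r ^ 8)

noncomputable def P1poly (r γ : ℝ) : ℝ :=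
  126 * (168 + 85 * γ) + 63 * Real.sqrt 3 * r * (867 + 596 * γ)
    + 1323 * r ^ 2 * (132 + 95 * γ) + 28 * Real.sqrt 3 * r ^ 3 * (3153 + 2300 * γ)
    + 24 * r ^ 4 * (2463 + 1843 * γ) + Real.sqrt 3 * r ^ 5 * (588 + 905 * γ)
    - 36 * r ^ 6 * (177 + 124 * γ) - 6 * Real.sqrt 3 * r ^ 7 * (174 + 127 * γ)
    - 36 * r ^ 8 * (4 + 3 * γ)

noncomputable def P2poly (r γ : ℝ) : ℝ :=
  -8 * (63 * (24 + 17 * γ) + 63 * Real.sqrt 3 * r * (105 + 74 * γ)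
    + 378 * r ^ 2 * (78 + 55 * γ) + 14 * Real.sqrt 3 * r ^ 3 * (1569 + 1108 * γ)
    + 12 * r ^ 4 * (2337 + 1652 * γ) + Real.sqrt 3 * r ^ 5 * (6954 + 4919 * γ)
    + 18 * r ^ 6 * (154 + 109 * γ) + 6 * Real.sqrt 3 * r ^ 7 * (24 + 17 * γ))

noncomputable def P3poly (r γ : ℝ) : ℝ :=
  126 * (24 + 17 * γ) + 63 * Real.sqrt 3 * r * (277 + 196 * γ)
    + 189 * r ^ 2 * (516 + 365 * γ) + 28 * Real.sqrt 3 * r ^ 3 * (3399 + 2404 * γ)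
    + 24 * r ^ 4 * (7193 + 5087 * γ) + Real.sqrt 3 * r ^ 5 * (68436 + 48397 * γ)
    + 36 * r ^ 6 * (1465 + 1036 * γ) + 6 * Real.sqrt 3 * r ^ 7 * (1342 + 949 * γ)
    + 12 * r ^ 8 * (140 + 99 * γ)

noncomputable def Qpoly (r : ℝ) : ℝ := 1 + Real.sqrt 3 * r + r ^ 2

/-- The Laplace transform E[e^{-σV}] of the finite Voronoï cell volume law,
formula (3.14), with r = σ^{1/4}. -/
noncomputable def Elaplace (σ : ℝ) : ℝ :=
  let r := σ ^ ((1 : ℝ) / 4)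
  (3 / 2) * (Ppoly r +
      (P1poly r (Real.sqrt 2) * Real.exp (Real.sqrt 6 * r)
        + P1poly r (-Real.sqrt 2) * Real.exp (-(Real.sqrt 6 * r)))
      + (P2poly r (Real.sqrt 2) * Real.exp (2 * Real.sqrt 6 * r)
        + P2poly r (-Real.sqrt 2) * Real.exp (-(2 * Real.sqrt 6 * r)))
      + (P3poly r (Real.sqrt 2) * Real.exp (3 * Real.sqrt 6 * r)
        + P3poly r (-Real.sqrt 2) * Real.exp (-(3 * Real.sqrt 6 * r)))) /
    (Qpoly r * (4 + (4 + 3 * Real.sqrt 2) * Real.exp (Real.sqrt 6 * r)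
        + (4 - 3 * Real.sqrt 2) * Real.exp (-(Real.sqrt 6 * r))) - 12) ^ 4

/-! ### Auxiliary definitions: reversed polynomials -/

/-- Reversed polynomial of `Ppoly`: `Pt x = x^8 * Ppoly (1/x)`. -/
noncomputable def Pt (x : ℝ) : ℝ :=
  96 * (-252 * x ^ 8 - 399 * Real.sqrt 3 * x ^ 7 - 756 * x ^ 6 - 161 * Real.sqrt 3 * x ^ 5
    + 170 * x ^ 4 + 153 * Real.sqrt 3 * x ^ 3 + 144 * x ^ 2 + 22 * Real.sqrt 3 * x + 4)

noncomputable def P1t (x γ : ℝ) : ℝ :=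
  126 * (168 + 85 * γ) * x ^ 8 + 63 * Real.sqrt 3 * (867 + 596 * γ) * x ^ 7
    + 1323 * (132 + 95 * γ) * x ^ 6 + 28 * Real.sqrt 3 * (3153 + 2300 * γ) * x ^ 5
    + 24 * (2463 + 1843 * γ) * x ^ 4 + Real.sqrt 3 * (588 + 905 * γ) * x ^ 3
    - 36 * (177 + 124 * γ) * x ^ 2 - 6 * Real.sqrt 3 * (174 + 127 * γ) * x
    - 36 * (4 + 3 * γ)

noncomputable def P2t (x γ : ℝ) : ℝ :=
  -8 * (63 * (24 + 17 * γ) * x ^ 8 + 63 * Real.sqrt 3 * (105 + 74 * γ) * x ^ 7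
    + 378 * (78 + 55 * γ) * x ^ 6 + 14 * Real.sqrt 3 * (1569 + 1108 * γ) * x ^ 5
    + 12 * (2337 + 1652 * γ) * x ^ 4 + Real.sqrt 3 * (6954 + 4919 * γ) * x ^ 3
    + 18 * (154 + 109 * γ) * x ^ 2 + 6 * Real.sqrt 3 * (24 + 17 * γ) * x)

noncomputable def P3t (x γ : ℝ) : ℝ :=
  126 * (24 + 17 * γ) * x ^ 8 + 63 * Real.sqrt 3 * (277 + 196 * γ) * x ^ 7
    + 189 * (516 + 365 * γ) * x ^ 6 + 28 * Real.sqrt 3 * (3399 + 2404 * γ) * x ^ 5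
    + 24 * (7193 + 5087 * γ) * x ^ 4 + Real.sqrt 3 * (68436 + 48397 * γ) * x ^ 3
    + 36 * (1465 + 1036 * γ) * x ^ 2 + 6 * Real.sqrt 3 * (1342 + 949 * γ) * x
    + 12 * (140 + 99 * γ)

/-- Rescaled numerator, as a (poly) function of `x = 1/r` and `t = exp (-√6 r)`. -/
noncomputable def Ntop (p : ℝ × ℝ) : ℝ :=
  (3 / 2) * (p.2 ^ 3 * Pt p.1
    + p.2 ^ 2 * P1t p.1 (Real.sqrt 2) + p.2 ^ 4 * P1t p.1 (-Real.sqrt 2)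
    + p.2 * P2t p.1 (Real.sqrt 2) + p.2 ^ 5 * P2t p.1 (-Real.sqrt 2)
    + P3t p.1 (Real.sqrt 2) + p.2 ^ 6 * P3t p.1 (-Real.sqrt 2))

/-- Rescaled base of the denominator. -/
noncomputable def dbase (p : ℝ × ℝ) : ℝ :=
  (p.1 ^ 2 + Real.sqrt 3 * p.1 + 1) *
      (4 * p.2 + (4 + 3 * Real.sqrt 2) + (4 - 3 * Real.sqrt 2) * p.2 ^ 2)
    - 12 * p.1 ^ 2 * p.2

noncomputable def fRat (p : ℝ × ℝ) : ℝ := Ntop p / (dbase p) ^ 4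

lemma Ppoly_rev {r : ℝ} (hr : r ≠ 0) : Ppoly r = r ^ 8 * Pt r⁻¹ := by
  unfold Ppoly Pt; field_simp

lemma P1poly_rev {r : ℝ} (hr : r ≠ 0) (γ : ℝ) : P1poly r γ = r ^ 8 * P1t r⁻¹ γ := by
  unfold P1poly P1t; field_simp

lemma P2poly_rev {r : ℝ} (hr : r ≠ 0) (γ : ℝ) : P2poly r γ = r ^ 8 * P2t r⁻¹ γ := by
  unfold P2poly P2t; field_simp

lemma P3poly_rev {r : ℝ} (hr : r ≠ 0) (γ : ℝ) : P3poly r γ = r ^ 8 * P3t r⁻¹ γ := by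
  unfold P3poly P3t; field_simp

lemma Elaplace_key {σ : ℝ} (hσ : 0 < σ) :
    Elaplace σ * Real.exp (Real.sqrt 6 * σ ^ ((1 : ℝ) / 4)) =
      fRat ((σ ^ ((1 : ℝ) / 4))⁻¹, Real.exp (-(Real.sqrt 6 * σ ^ ((1 : ℝ) / 4)))) := by
  set r : ℝ := σ ^ ((1 : ℝ) / 4) with hrdef
  have hr : 0 < r := Real.rpow_pos_of_pos hσ _
  have hr0 : r ≠ 0 := ne_of_gt hr
  set E : ℝ := Real.exp (Real.sqrt 6 * r) with hE
  have hE0 : E ≠ 0 := ne_of_gt (Real.exp_pos _)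
  have h1 : Real.exp (-(Real.sqrt 6 * r)) = E⁻¹ := Real.exp_neg _
  have h2 : Real.exp (2 * Real.sqrt 6 * r) = E ^ 2 := by
    rw [show (2 : ℝ) * Real.sqrt 6 * r = Real.sqrt 6 * r + Real.sqrt 6 * r from by ring,
      Real.exp_add, sq, hE]
  have h3 : Real.exp (3 * Real.sqrt 6 * r) = E ^ 3 := by
    rw [show (3 : ℝ) * Real.sqrt 6 * r = Real.sqrt 6 * r + (Real.sqrt 6 * r + Real.sqrt 6 * r)
      from by ring, Real.exp_add, Real.exp_add, hE]; ring
  have h2n : Real.exp (-(2 * Real.sqrt 6 * r)) = (E ^ 2)⁻¹ := by rw [Real.exp_neg, h2]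
  have h3n : Real.exp (-(3 * Real.sqrt 6 * r)) = (E ^ 3)⁻¹ := by rw [Real.exp_neg, h3]
  have hEl : Elaplace σ = (3 / 2) * (Ppoly r +
      (P1poly r (Real.sqrt 2) * E + P1poly r (-Real.sqrt 2) * E⁻¹)
      + (P2poly r (Real.sqrt 2) * E ^ 2 + P2poly r (-Real.sqrt 2) * (E ^ 2)⁻¹)
      + (P3poly r (Real.sqrt 2) * E ^ 3 + P3poly r (-Real.sqrt 2) * (E ^ 3)⁻¹)) /
      (Qpoly r * (4 + (4 + 3 * Real.sqrt 2) * E + (4 - 3 * Real.sqrt 2) * E⁻¹) - 12) ^ 4 := by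
    unfold Elaplace
    simp only [← hrdef, h1, h2, h3, h2n, h3n, ← hE]
  have hdb : Qpoly r * (4 + (4 + 3 * Real.sqrt 2) * E + (4 - 3 * Real.sqrt 2) * E⁻¹) - 12
      = r ^ 2 * E * dbase (r⁻¹, E⁻¹) := by
    unfold Qpoly dbase
    field_simp
  have hnum : (3 / 2) * (Ppoly r +
      (P1poly r (Real.sqrt 2) * E + P1poly r (-Real.sqrt 2) * E⁻¹)
      + (P2poly r (Real.sqrt 2) * E ^ 2 + P2poly r (-Real.sqrt 2) * (E ^ 2)⁻¹)
      + (P3poly r (Real.sqrt 2) * E ^ 3 + P3poly r (-Real.sqrt 2) * (E ^ 3)⁻¹)) * E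
      = Ntop (r⁻¹, E⁻¹) * (r ^ 2 * E) ^ 4 := by
    rw [Ppoly_rev hr0, P1poly_rev hr0, P1poly_rev hr0, P2poly_rev hr0, P2poly_rev hr0,
      P3poly_rev hr0, P3poly_rev hr0]
    unfold Ntop
    field_simp
    ring
  rw [hEl, hdb, fRat, h1]
  by_cases hz : dbase (r⁻¹, E⁻¹) = 0
  · simp [hz]
  · have h4 : ((r ^ 2 * E) ^ 4 : ℝ) ≠ 0 := pow_ne_zero _ (by positivity)
    rw [mul_pow (r ^ 2 * E)]
    calc (3 / 2) * (Ppoly r +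
          (P1poly r (Real.sqrt 2) * E + P1poly r (-Real.sqrt 2) * E⁻¹)
          + (P2poly r (Real.sqrt 2) * E ^ 2 + P2poly r (-Real.sqrt 2) * (E ^ 2)⁻¹)
          + (P3poly r (Real.sqrt 2) * E ^ 3 + P3poly r (-Real.sqrt 2) * (E ^ 3)⁻¹)) /
          ((r ^ 2 * E) ^ 4 * dbase (r⁻¹, E⁻¹) ^ 4) * E
        = ((3 / 2) * (Ppoly r +
          (P1poly r (Real.sqrt 2) * E + P1poly r (-Real.sqrt 2) * E⁻¹)
          + (P2poly r (Real.sqrt 2) * E ^ 2 + P2poly r (-Real.sqrt 2) * (E ^ 2)⁻¹)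
          + (P3poly r (Real.sqrt 2) * E ^ 3 + P3poly r (-Real.sqrt 2) * (E ^ 3)⁻¹)) * E) /
          (r ^ 2 * E) ^ 4 / dbase (r⁻¹, E⁻¹) ^ 4 := by ring
      _ = Ntop (r⁻¹, E⁻¹) / dbase (r⁻¹, E⁻¹) ^ 4 := by
          rw [hnum, mul_div_assoc, div_self h4, mul_one]

lemma sqrt2_sq : Real.sqrt 2 ^ 2 = 2 := Real.sq_sqrt (by norm_num)

lemma dbase_zero_ne : dbase (0, 0) ≠ 0 := by
  have h2 : (0:ℝ) ≤ Real.sqrt 2 := Real.sqrt_nonneg 2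
  unfold dbase
  simp only [Prod.fst, Prod.snd]
  norm_num
  positivity

lemma fRat_zero : fRat (0, 0) = (9 / 2) * (3 * Real.sqrt 2 - 4) := by
  have h2 : (0:ℝ) ≤ Real.sqrt 2 := Real.sqrt_nonneg 2
  have hd : dbase (0, 0) = 4 + 3 * Real.sqrt 2 := by unfold dbase; norm_num
  have hn : Ntop (0, 0) = 18 * (140 + 99 * Real.sqrt 2) := by
    unfold Ntop Pt P1t P2t P3t; norm_num; ring
  have hd0 : (4 + 3 * Real.sqrt 2 : ℝ) ≠ 0 := by positivity
  rw [fRat, hd, hn, div_eq_iff (pow_ne_zero 4 hd0)]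
  linear_combination (-(3564 : ℝ) - 6075 * Real.sqrt 2 - 4374 * Real.sqrt 2 ^ 2
    - (2187 / 2) * Real.sqrt 2 ^ 3) * sqrt2_sq

lemma fRat_contAt : ContinuousAt fRat (0, 0) := by
  have hN : Continuous Ntop := by unfold Ntop Pt P1t P2t P3t; fun_prop
  have hD : Continuous dbase := by unfold dbase; fun_prop
  exact (hN.continuousAt).div ((hD.pow 4).continuousAt)
    (pow_ne_zero 4 dbase_zero_ne)

/-- E[e^{-σV}] ~ (9/2)(3√2 - 4)·e^{-√6·σ^{1/4}} as σ → +∞. -/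
theorem stmt_10 :
    Elaplace ~[Filter.atTop]
      (fun σ : ℝ => (9 / 2) * (3 * Real.sqrt 2 - 4) *
        Real.exp (-(Real.sqrt 6 * σ ^ ((1 : ℝ) / 4)))) := by
  have hs2 : (4/3:ℝ) < Real.sqrt 2 := by
    nlinarith [sqrt2_sq, Real.sqrt_nonneg 2]
  have hCpos : (0:ℝ) < ((9:ℝ) / 2) * (3 * Real.sqrt 2 - 4) := by nlinarith
  have hC : ((9:ℝ) / 2) * (3 * Real.sqrt 2 - 4) ≠ 0 := ne_of_gt hCpos
  have hv : ∀ᶠ σ : ℝ in atTop, ((9:ℝ) / 2) * (3 * Real.sqrt 2 - 4) *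
      Real.exp (-(Real.sqrt 6 * σ ^ ((1 : ℝ) / 4))) ≠ 0 := by
    filter_upwards with σ
    exact mul_ne_zero hC (ne_of_gt (Real.exp_pos _))
  rw [Asymptotics.isEquivalent_iff_tendsto_one hv]
  have h14 : Tendsto (fun σ : ℝ => σ ^ ((1:ℝ)/4)) atTop atTop :=
    tendsto_rpow_atTop (by norm_num)
  have hx : Tendsto (fun σ : ℝ => (σ ^ ((1:ℝ)/4))⁻¹) atTop (nhds 0) :=
    h14.inv_tendsto_atTop
  have h6 : (0:ℝ) < Real.sqrt 6 := Real.sqrt_pos.mpr (by norm_num)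
  have hexp : Tendsto (fun σ : ℝ => Real.exp (-(Real.sqrt 6 * σ ^ ((1:ℝ)/4)))) atTop (nhds 0) :=
    Real.tendsto_exp_atBot.comp (tendsto_neg_atTop_atBot.comp (h14.const_mul_atTop h6))
  have hg : Tendsto (fun σ : ℝ => ((σ ^ ((1:ℝ)/4))⁻¹,
      Real.exp (-(Real.sqrt 6 * σ ^ ((1:ℝ)/4))))) atTop (nhds ((0:ℝ), (0:ℝ))) :=
    hx.prodMk_nhds hexp
  have hlim : Tendsto (fun σ : ℝ => fRat ((σ ^ ((1:ℝ)/4))⁻¹,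
      Real.exp (-(Real.sqrt 6 * σ ^ ((1:ℝ)/4)))) / ((9/2) * (3 * Real.sqrt 2 - 4)))
      atTop (nhds 1) := by
    have := (fRat_contAt.tendsto.comp hg).div_const ((9/2) * (3 * Real.sqrt 2 - 4))
    rw [fRat_zero, div_self hC] at this
    exact this
  refine hlim.congr' ?_
  filter_upwards [eventually_gt_atTop (0:ℝ)] with σ hσ
  have key := Elaplace_key hσ
  have hE0 : Real.exp (Real.sqrt 6 * σ ^ ((1:ℝ)/4)) ≠ 0 := ne_of_gt (Real.exp_pos _)
  simp only [Pi.div_apply]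
  rw [← key, Real.exp_neg]
  field_simp
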